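/- For the lazy cycle walk on ZMod n with stay probability p, if n > k then the probability of being at the starting state after k steps equals the probability of never moving: μ_k(i)(i) = p^k for every i ∈ ZMod n. -/

import Mathlib

open scoped ENNReal

/-- One step of the lazy cycle walk on `ZMod n` with stay probability `p`:
stay at `i` with probability `p`, move to `i + 1` with probability `1 − p`. -/
noncomputable def lazyStep (n : ℕ) (p : ℝ) (hp : 0 ≤ p) (hp1 : p ≤ 1) (i : ZMod n) :
    PMF (ZMod n) :=
  (PMF.bernoulli (Real.toNNReal (1 - p)) (Real.toNNReal_le_one.mpr (by linarith))).map
    (fun b => if b then i + 1 else i)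

/-- The distribution of the lazy cycle walk after `k` steps started at `i`
(the `k`-fold monadic iterate of the one-step PMF). -/
noncomputable def lazyIter (n : ℕ) (p : ℝ) (hp : 0 ≤ p) (hp1 : p ≤ 1) :
    ℕ → ZMod n → PMF (ZMod n)
  | 0, i => PMF.pure i
  | k + 1, i => (lazyIter n p hp hp1 k i).bind (lazyStep n p hp hp1)

lemma lazyStep_eq_zero (n : ℕ) (p : ℝ) (hp : 0 ≤ p) (hp1 : p ≤ 1) (a j : ZMod n)
    (h1 : j ≠ a) (h2 : j ≠ a + 1) : lazyStep n p hp hp1 a j = 0 := by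
  simp [lazyStep, PMF.map_apply, tsum_bool, h1, h2]

lemma lazyStep_self (n : ℕ) (p : ℝ) (hp : 0 ≤ p) (hp1 : p ≤ 1) (a : ZMod n)
    (h : a ≠ a + 1) : lazyStep n p hp hp1 a a = ENNReal.ofReal p := by
  have h1 : ((Real.toNNReal (1 - p) : ℝ≥0∞)) = 1 - ENNReal.ofReal p := by
    show ENNReal.ofReal (1 - p) = _
    rw [ENNReal.ofReal_sub _ hp, ENNReal.ofReal_one]
  simp [lazyStep, PMF.map_apply, tsum_bool, PMF.bernoulli_apply, h, h1,
    ENNReal.sub_sub_cancel ENNReal.one_ne_top (ENNReal.ofReal_le_one.mpr hp1)]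

lemma lazyIter_supp (n : ℕ) [NeZero n] (p : ℝ) (hp : 0 ≤ p) (hp1 : p ≤ 1) :
    ∀ (k : ℕ) (i j : ZMod n), k < (j - i).val → lazyIter n p hp hp1 k i j = 0 := by
  intro k
  induction k with
  | zero =>
    intro i j h
    have : j ≠ i := fun hji => by simp [hji] at h
    simp [lazyIter, PMF.pure_apply, this]
  | succ k ih =>
    intro i j h
    simp only [lazyIter, PMF.bind_apply]
    refine ENNReal.tsum_eq_zero.mpr fun a => ?_
    by_cases ha : k < (a - i).val
    · rw [ih i a ha, zero_mul]
    · push_neg at ha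
      have h1 : j ≠ a := by
        intro hja; subst hja; omega
      have h2 : j ≠ a + 1 := by
        intro hja; subst hja
        have : (a + 1 - i) = (a - i) + 1 := by ring
        have hle : (a + 1 - i).val ≤ (a - i).val + (1 : ZMod n).val := by
          rw [this]; exact ZMod.val_add_le _ _
        have hone : (1 : ZMod n).val ≤ 1 := by
          rcases eq_or_ne n 1 with h1' | h1'
          · subst h1'; decide
          · rw [ZMod.val_one'' h1']
        omega
      rw [lazyStep_eq_zero n p hp hp1 a j h1 h2, mul_zero]

/-- **Return probability before wrap-around.**
If `n > k`, the probability that the lazy cycle walk is at its starting state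
after `k` steps equals the probability of never moving: `μ_k(i)(i) = p^k`. -/
theorem lazyIter_apply_self (n : ℕ) [NeZero n] (p : ℝ) (hp : 0 ≤ p) (hp1 : p ≤ 1)
    (k : ℕ) (hnk : k < n) (i : ZMod n) :
    lazyIter n p hp hp1 k i i = ENNReal.ofReal p ^ k := by
  induction k with
  | zero => simp [lazyIter]
  | succ k ih =>
    have hk : k < n := Nat.lt_of_succ_lt hnk
    have hn2 : 1 < n := by omega
    haveI : Fact (1 < n) := ⟨hn2⟩
    simp only [lazyIter, PMF.bind_apply]
    rw [tsum_eq_single i ?_]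
    · rw [ih hk, lazyStep_self n p hp hp1 i (by
        intro h
        have := ZMod.val_one n
        have h0 : (1 : ZMod n) = 0 := by linear_combination -h
        rw [h0, ZMod.val_zero] at this; omega)]
      ring
    · intro a ha
      by_cases hia : i = a + 1
      · -- then a = i - 1, (a - i).val = n - 1 > k
        have hval : (a - i).val = n - 1 := by
          have : a - i = -1 := by rw [hia]; ring
          rw [this]
          obtain ⟨m, rfl⟩ := Nat.exists_eq_succ_of_ne_zero (NeZero.ne n)
          simpa using ZMod.val_neg_one m
        have : k < (a - i).val := by omega
        rw [lazyIter_supp n p hp hp1 k i a this, zero_mul]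
      · rw [lazyStep_eq_zero n p hp hp1 a i (fun h => ha h.symm) hia, mul_zero]
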